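/- Let Z be a special symbol of defect 1 and size (m+1,m) and Z' a special symbol of defect 0 and size (m',m') with m' = m or m' = m+1. Then: (i) if m' = m+1, Z' is regular and D_Z = {Z'}, then Z is regular; (ii) if m' = m, Z is regular and D_{Z'} = {Z}, then Z' is regular. -/

import Mathlib

open scoped symmDiff

/-- A symbol: a pair of finsets of naturals (its two rows, each read in
strictly decreasing order). -/
abbrev Symb :=  Finset ℕ × Finset ℕ

/-- The strictly decreasing enumeration of a finset of naturals. -/
def rowList (s : Finset ℕ) : List ℕ := (s.sort (· ≤ ·)).reverse

/-- The `i`-th entry (0-based) of the strictly decreasing enumeration of `s`. -/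
def ent (s : Finset ℕ) (i : ℕ) : Option ℕ := (rowList s)[i]?

/-- Impose a relation on two optional entries whenever both exist. -/
def oRel (r : ℕ → ℕ → Prop) : Option ℕ → Option ℕ → Prop
  | some x, some y => r x y
  | _, _ => True

/-- `Z` is a special symbol of defect 1 and size `(m+1, m)`. -/
def IsSpecial1 (Z : Symb) (m : ℕ) : Prop :=
  Z.1.card = m + 1 ∧ Z.2.card = m ∧
  (∀ i, oRel (· ≥ ·) (ent Z.1 i) (ent Z.2 i)) ∧
  (∀ i, oRel (· ≥ ·) (ent Z.2 i) (ent Z.1 (i + 1)))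

/-- `Z'` is a special symbol of defect 0 and size `(m', m')`. -/
def IsSpecial0 (Z : Symb) (m' : ℕ) : Prop :=
  Z.1.card = m' ∧ Z.2.card = m' ∧
  (∀ i, oRel (· ≥ ·) (ent Z.1 i) (ent Z.2 i)) ∧
  (∀ i, oRel (· ≥ ·) (ent Z.2 i) (ent Z.1 (i + 1)))

/-- `Z_I`: the entries of `Z` lying in exactly one row (row remembered). -/
def ZI (Z : Symb) : Symb := (Z.1 \ Z.2, Z.2 \ Z.1)

/-- `M` is a subset of `Z_I`. -/
def SubZI (M Z : Symb) : Prop := M.1 ⊆ Z.1 \ Z.2 ∧ M.2 ⊆ Z.2 \ Z.1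

/-- `Z` is regular: no degenerate entries. -/
def Regular (Z : Symb) : Prop := Disjoint Z.1 Z.2

/-- `Λ_M`: exchange the rows of the entries of `M`. -/
def lam (Z M : Symb) : Symb := ((Z.1 \ M.1) ∪ M.2, (Z.2 \ M.2) ∪ M.1)

/-- `S̄_Z = {Λ_M : M ⊆ Z_I}`. -/
def Sbar (Z : Symb) : Set Symb := {Λ | ∃ M, SubZI M Z ∧ Λ = lam Z M}

/-- Size and inequality conditions of `B̄⁺_{Z,Z'}` in the case `m' = m`. -/
def Bm (Λ Λ' : Symb) : Prop :=
  Λ'.1.card = Λ.2.card ∧ Λ'.2.card + 1 = Λ.1.card ∧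
  (∀ i, oRel (· > ·) (ent Λ.1 i) (ent Λ'.2 i)) ∧
  (∀ i, oRel (· ≥ ·) (ent Λ'.2 i) (ent Λ.1 (i + 1))) ∧
  (∀ i, oRel (· > ·) (ent Λ.2 i) (ent Λ'.1 (i + 1))) ∧
  (∀ i, oRel (· ≥ ·) (ent Λ'.1 i) (ent Λ.2 i))

/-- Size and inequality conditions of `B̄⁺_{Z,Z'}` in the case `m' = m + 1`. -/
def Bm1 (Λ Λ' : Symb) : Prop :=
  Λ'.1.card = Λ.2.card + 1 ∧ Λ'.2.card = Λ.1.card ∧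
  (∀ i, oRel (· ≥ ·) (ent Λ.1 i) (ent Λ'.2 i)) ∧
  (∀ i, oRel (· > ·) (ent Λ'.2 i) (ent Λ.1 (i + 1))) ∧
  (∀ i, oRel (· ≥ ·) (ent Λ.2 i) (ent Λ'.1 (i + 1))) ∧
  (∀ i, oRel (· > ·) (ent Λ'.1 i) (ent Λ.2 i))

/-- The relation `B̄⁺_{Z,Z'}`. -/
def BbarPlus (Z Z' : Symb) (m m' : ℕ) (Λ Λ' : Symb) : Prop :=
  Λ ∈ Sbar Z ∧ Λ' ∈ Sbar Z' ∧
  ((m' = m ∧ Bm Λ Λ') ∨ (m' = m + 1 ∧ Bm1 Λ Λ'))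

/-- The relation `D_{Z,Z'}`. -/
def DRel (Z Z' : Symb) (m m' : ℕ) (A A' : Symb) : Prop :=
  BbarPlus Z Z' m m' A A' ∧
  A.1.card = m + 1 ∧ A.2.card = m ∧ A'.1.card = m' ∧ A'.2.card = m'

/-- `{c, d}` is a consecutive pair in `Z_I`. -/
def ConsecPair (Z : Symb) (c d : ℕ) : Prop :=
  c ∈ Z.1 \ Z.2 ∧ d ∈ Z.2 \ Z.1 ∧
  ∀ x ∈ (Z.1 \ Z.2) ∪ (Z.2 \ Z.1), ¬(min c d < x ∧ x < max c d)

namespace Stmt9Aux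


/-- number of elements of `s` that are `≥ k`. -/
def cnt (s : Finset ℕ) (k : ℕ) : ℕ := (s.filter (fun y => k ≤ y)).card

lemma rowList_length (s : Finset ℕ) : (rowList s).length = s.card := by
  simp [rowList]

lemma rowList_sorted (s : Finset ℕ) : (rowList s).Pairwise (· > ·) :=
  List.pairwise_reverse.mpr (Finset.sortedLT_sort s).pairwise

lemma mem_rowList {s : Finset ℕ} {x : ℕ} : x ∈ rowList s ↔ x ∈ s := by
  simp [rowList]

lemma ent_eq_some {s : Finset ℕ} {i x : ℕ} (h : ent s i = some x) :
    ∃ hi : i < (rowList s).length, (rowList s)[i] = x :=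
  List.getElem?_eq_some_iff.mp h

lemma ent_mem {s : Finset ℕ} {i x : ℕ} (h : ent s i = some x) : x ∈ s := by
  obtain ⟨hi, hx⟩ := ent_eq_some h
  exact mem_rowList.mp (hx ▸ List.getElem_mem hi)

lemma ent_lt_card {s : Finset ℕ} {i x : ℕ} (h : ent s i = some x) : i < s.card := by
  obtain ⟨hi, _⟩ := ent_eq_some h
  rwa [rowList_length] at hi

lemma exists_ent_of_lt_card {s : Finset ℕ} {i : ℕ} (h : i < s.card) : ∃ x, ent s i = some x := by
  rw [← rowList_length] at h
  exact ⟨_, List.getElem?_eq_getElem h⟩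

lemma rowList_pair {s : Finset ℕ} {i j : ℕ} (hi : i < (rowList s).length)
    (hj : j < (rowList s).length) (hij : i < j) : (rowList s)[j] < (rowList s)[i] := by
  have := List.pairwise_iff_get.mp (rowList_sorted s) ⟨i, hi⟩ ⟨j, hj⟩ hij
  simpa using this

lemma ent_strictAnti {s : Finset ℕ} {i j x y : ℕ} (h : ent s i = some x)
    (h' : ent s j = some y) (hij : i < j) : y < x := by
  obtain ⟨hi, hx⟩ := ent_eq_some h
  obtain ⟨hj, hy⟩ := ent_eq_some h'
  subst hx hy
  exact rowList_pair hi hj hij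

lemma ent_anti {s : Finset ℕ} {i j x y : ℕ} (h : ent s i = some x)
    (h' : ent s j = some y) (hij : i ≤ j) : y ≤ x := by
  rcases eq_or_lt_of_le hij with rfl | hlt
  · rw [h] at h'; injection h' with h''; omega
  · exact le_of_lt (ent_strictAnti h h' hlt)

lemma mem_exists_ent {s : Finset ℕ} {x : ℕ} (h : x ∈ s) : ∃ i, ent s i = some x := by
  obtain ⟨i, hi, hx⟩ := List.mem_iff_getElem.mp (mem_rowList.mpr h)
  exact ⟨i, by rw [ent, List.getElem?_eq_getElem hi, hx]⟩

lemma cnt_le_card (s : Finset ℕ) (k : ℕ) : cnt s k ≤ s.card :=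
  Finset.card_le_card (Finset.filter_subset _ _)

lemma cnt_anti {s : Finset ℕ} {k k' : ℕ} (h : k ≤ k') : cnt s k' ≤ cnt s k := by
  apply Finset.card_le_card
  intro z hz
  simp only [Finset.mem_filter] at hz ⊢
  exact ⟨hz.1, le_trans h hz.2⟩

lemma le_cnt_of_ent {s : Finset ℕ} {i x k : ℕ} (h : ent s i = some x) (hk : k ≤ x) :
    i + 1 ≤ cnt s k := by
  obtain ⟨hi, hx⟩ := ent_eq_some h
  have : (Finset.range (i + 1)).card ≤ (s.filter (fun y => k ≤ y)).card := by
    apply Finset.card_le_card_of_injOn (fun j => (rowList s).getD j 0)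
    · intro j hj
      rw [Finset.mem_coe, Finset.mem_range] at hj
      have hjl : j < (rowList s).length := lt_of_lt_of_le hj (by omega)
      simp only [Finset.mem_coe]
      rw [List.getD_eq_getElem _ _ hjl]
      rw [Finset.mem_filter]
      refine ⟨mem_rowList.mp (List.getElem_mem hjl), ?_⟩
      rcases eq_or_lt_of_le (Nat.lt_succ_iff.mp hj) with rfl | hlt
      · omega
      · have := rowList_pair hjl hi hlt
        omega
    · intro j hj j' hj' hee
      rw [Finset.mem_coe, Finset.mem_range] at hj hj'
      have hjl : j < (rowList s).length := by omega
      have hjl' : j' < (rowList s).length := by omega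
      simp only [] at hee
      rw [List.getD_eq_getElem _ _ hjl, List.getD_eq_getElem _ _ hjl'] at hee
      by_contra hne
      rcases Nat.lt_or_ge j j' with hlt | hge
      · have := rowList_pair hjl hjl' hlt; omega
      · have hlt : j' < j := by omega
        have := rowList_pair hjl' hjl hlt; omega
  rw [Finset.card_range] at this
  exact this

lemma ent_of_le_cnt {s : Finset ℕ} {i k : ℕ} (h : i + 1 ≤ cnt s k) :
    ∃ x, ent s i = some x ∧ k ≤ x := by
  have hic : i < s.card := lt_of_lt_of_le h (cnt_le_card s k)
  obtain ⟨x, hx⟩ := exists_ent_of_lt_card hic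
  refine ⟨x, hx, ?_⟩
  by_contra hxk
  push_neg at hxk
  -- every element ≥ k sits at an index < i
  have hsub : s.filter (fun y => k ≤ y) ⊆ (Finset.range i).image (fun j => (rowList s).getD j 0) := by
    intro z hz
    rw [Finset.mem_filter] at hz
    obtain ⟨j, hjl, hjz⟩ := List.mem_iff_getElem.mp (mem_rowList.mpr hz.1)
    have hji : j < i := by
      by_contra hge
      push_neg at hge
      have hzx : z ≤ x := by
        have : ent s j = some z := by rw [ent, List.getElem?_eq_getElem hjl, hjz]
        exact ent_anti hx this hge
      omega
    rw [Finset.mem_image]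
    exact ⟨j, Finset.mem_range.mpr hji, by rw [List.getD_eq_getElem _ _ hjl]; exact hjz⟩
  have := Finset.card_le_card hsub
  have h2 := Finset.card_image_le (s := Finset.range i) (f := fun j => (rowList s).getD j 0)
  rw [Finset.card_range] at h2
  have h3 : cnt s k ≤ i := le_trans this h2
  omega

lemma cnt_lt_mem {s : Finset ℕ} {v k : ℕ} (hv : v ∈ s) (h : v < k) : cnt s k + 1 ≤ cnt s v := by
  have : insert v (s.filter (fun y => k ≤ y)) ⊆ s.filter (fun y => v ≤ y) := by
    intro z hz
    rw [Finset.mem_insert] at hz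
    rcases hz with rfl | hz
    · exact Finset.mem_filter.mpr ⟨hv, le_refl _⟩
    · rw [Finset.mem_filter] at hz ⊢; exact ⟨hz.1, by omega⟩
  have hcard := Finset.card_le_card this
  rw [Finset.card_insert_of_notMem (by simp only [Finset.mem_filter, not_and]; omega)] at hcard
  exact hcard

lemma cnt_gap {P : Finset ℕ} {u w k : ℕ} (hgap : ∀ z ∈ P, ¬(u ≤ z ∧ z < w))
    (h1 : u ≤ k) (h2 : k ≤ w) : cnt P k = cnt P u := by
  unfold cnt
  congr 1
  apply Finset.filter_congr
  intro z hz
  have := hgap z hz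
  omega

lemma cnt_insert {Q : Finset ℕ} {w : ℕ} (hw : w ∉ Q) (k : ℕ) :
    cnt (insert w Q) k = cnt Q k + (if k ≤ w then 1 else 0) := by
  unfold cnt
  rw [Finset.filter_insert]
  split
  · rw [Finset.card_insert_of_notMem (by simp [hw])]
  · omega

lemma cnt_erase {Q : Finset ℕ} {v : ℕ} (hv : v ∈ Q) (k : ℕ) :
    cnt (Q.erase v) k + (if k ≤ v then 1 else 0) = cnt Q k := by
  unfold cnt
  rw [Finset.filter_erase]
  split
  · rw [Finset.card_erase_add_one]
    rw [Finset.mem_filter]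
    exact ⟨hv, by assumption⟩
  · rw [Finset.erase_eq_of_notMem]
    · omega
    · rw [Finset.mem_filter]; tauto

lemma cnt_swap {Q : Finset ℕ} {v w : ℕ} (hv : v ∈ Q) (hw : w ∉ Q) (k : ℕ) :
    cnt (insert w (Q.erase v)) k + (if k ≤ v then 1 else 0)
      = cnt Q k + (if k ≤ w then 1 else 0) := by
  have hw' : w ∉ Q.erase v := fun hc => hw (Finset.mem_of_mem_erase hc)
  rw [cnt_insert hw', ← cnt_erase hv k]
  split_ifs <;> omega

lemma card_swap {Q : Finset ℕ} {v w : ℕ} (hv : v ∈ Q) (hw : w ∉ Q) :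
    (insert w (Q.erase v)).card = Q.card := by
  have hw' : w ∉ Q.erase v := fun hc => hw (Finset.mem_of_mem_erase hc)
  rw [Finset.card_insert_of_notMem hw', Finset.card_erase_of_mem hv]
  have : 1 ≤ Q.card := Finset.card_pos.mpr ⟨v, hv⟩
  omega



lemma oRel_none_left (r : ℕ → ℕ → Prop) (o : Option ℕ) : oRel r none o := by
  cases o <;> trivial

lemma oRel_none_right (r : ℕ → ℕ → Prop) (o : Option ℕ) : oRel r o none := by
  cases o <;> trivial

lemma oRel_some {r : ℕ → ℕ → Prop} {x y : ℕ} : oRel r (some x) (some y) ↔ r x y := Iff.rfl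

/-- `s_i ≥ t_i` characterization. -/
lemma Rge (s t : Finset ℕ) :
    (∀ i, oRel (· ≥ ·) (ent s i) (ent t i)) ↔ ∀ k, min (cnt t k) s.card ≤ cnt s k := by
  constructor
  · intro h k
    set j := min (cnt t k) s.card with hj
    rcases Nat.eq_zero_or_pos j with h0 | hpos
    · omega
    · obtain ⟨v, hv, hkv⟩ := ent_of_le_cnt (s := t) (i := j - 1) (k := k) (by omega)
      obtain ⟨u, hu⟩ := exists_ent_of_lt_card (s := s) (i := j - 1) (by omega)
      have := h (j - 1)
      rw [hu, hv] at this
      have := le_cnt_of_ent hu (le_trans hkv this)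
      omega
  · intro h i
    cases hu : ent s i with
    | none => exact oRel_none_left _ _
    | some u =>
      cases hv : ent t i with
      | none => exact oRel_none_right _ _
      | some v =>
        rw [oRel_some]
        have h1 := le_cnt_of_ent hv (le_refl v)
        have h2 := ent_lt_card hu
        have h3 := h v
        obtain ⟨u', hu', hvu'⟩ := ent_of_le_cnt (s := s) (i := i) (k := v) (by omega)
        rw [hu] at hu'; injection hu' with hh; omega

/-- `s_i > t_i` characterization. -/
lemma Rgt (s t : Finset ℕ) :
    (∀ i, oRel (· > ·) (ent s i) (ent t i)) ↔ ∀ k, min (cnt t k) s.card ≤ cnt s (k + 1) := by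
  constructor
  · intro h k
    set j := min (cnt t k) s.card with hj
    rcases Nat.eq_zero_or_pos j with h0 | hpos
    · omega
    · obtain ⟨v, hv, hkv⟩ := ent_of_le_cnt (s := t) (i := j - 1) (k := k) (by omega)
      obtain ⟨u, hu⟩ := exists_ent_of_lt_card (s := s) (i := j - 1) (by omega)
      have := h (j - 1)
      rw [hu, hv] at this
      have hlt : v < u := this
      have := le_cnt_of_ent hu (show k + 1 ≤ u by omega)
      omega
  · intro h i
    cases hu : ent s i with
    | none => exact oRel_none_left _ _
    | some u =>
      cases hv : ent t i with
      | none => exact oRel_none_right _ _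
      | some v =>
        rw [oRel_some]
        have h1 := le_cnt_of_ent hv (le_refl v)
        have h2 := ent_lt_card hu
        have h3 := h v
        obtain ⟨u', hu', hvu'⟩ := ent_of_le_cnt (s := s) (i := i) (k := v + 1) (by omega)
        rw [hu] at hu'; injection hu' with hh; omega

/-- `t_i ≥ s_{i+1}` characterization. -/
lemma Rge1 (t s : Finset ℕ) :
    (∀ i, oRel (· ≥ ·) (ent t i) (ent s (i + 1))) ↔
      ∀ k, min (cnt s k) (t.card + 1) ≤ cnt t k + 1 := by
  constructor
  · intro h k
    set j := min (cnt s k) (t.card + 1) with hj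
    rcases Nat.lt_or_ge j 2 with h0 | hpos
    · omega
    · obtain ⟨u, hu, hku⟩ := ent_of_le_cnt (s := s) (i := j - 1) (k := k) (by omega)
      obtain ⟨v, hv⟩ := exists_ent_of_lt_card (s := t) (i := j - 2) (by omega)
      have := h (j - 2)
      rw [hv, show j - 2 + 1 = j - 1 by omega, hu] at this
      have := le_cnt_of_ent hv (le_trans hku this)
      omega
  · intro h i
    cases hv : ent t i with
    | none => exact oRel_none_left _ _
    | some v =>
      cases hu : ent s (i + 1) with
      | none => exact oRel_none_right _ _
      | some u =>
        rw [oRel_some]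
        have h1 := le_cnt_of_ent hu (le_refl u)
        have h2 := ent_lt_card hv
        have h3 := h u
        obtain ⟨v', hv', huv'⟩ := ent_of_le_cnt (s := t) (i := i) (k := u) (by omega)
        rw [hv] at hv'; injection hv' with hh; omega

/-- `t_i > s_{i+1}` characterization. -/
lemma Rgt1 (t s : Finset ℕ) :
    (∀ i, oRel (· > ·) (ent t i) (ent s (i + 1))) ↔
      ∀ k, min (cnt s k) (t.card + 1) ≤ cnt t (k + 1) + 1 := by
  constructor
  · intro h k
    set j := min (cnt s k) (t.card + 1) with hj
    rcases Nat.lt_or_ge j 2 with h0 | hpos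
    · omega
    · obtain ⟨u, hu, hku⟩ := ent_of_le_cnt (s := s) (i := j - 1) (k := k) (by omega)
      obtain ⟨v, hv⟩ := exists_ent_of_lt_card (s := t) (i := j - 2) (by omega)
      have := h (j - 2)
      rw [hv, show j - 2 + 1 = j - 1 by omega, hu] at this
      have hlt : u < v := this
      have := le_cnt_of_ent hv (show k + 1 ≤ v by omega)
      omega
  · intro h i
    cases hv : ent t i with
    | none => exact oRel_none_left _ _
    | some v =>
      cases hu : ent s (i + 1) with
      | none => exact oRel_none_right _ _
      | some u =>
        rw [oRel_some]
        have h1 := le_cnt_of_ent hu (le_refl u)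
        have h2 := ent_lt_card hv
        have h3 := h u
        obtain ⟨v', hv', huv'⟩ := ent_of_le_cnt (s := t) (i := i) (k := u + 1) (by omega)
        rw [hv] at hv'; injection hv' with hh; omega



/-- Swap lemma, shape `min (cnt Q k) c ≤ cnt P k`. -/
lemma swap_ges {P Q : Finset ℕ} {v w : ℕ} (hv : v ∈ Q) (hw : w ∉ Q) (c : ℕ)
    (hgap : ∀ z ∈ P, ¬(min v w ≤ z ∧ z < max v w))
    (h : ∀ k, min (cnt Q k) c ≤ cnt P k) :
    ∀ k, min (cnt (insert w (Q.erase v)) k) c ≤ cnt P k := by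
  intro k
  have hs := cnt_swap hv hw k
  by_cases hkv : k ≤ v
  · have := h k; split_ifs at hs <;> omega
  · by_cases hkw : k ≤ w
    · -- v < k ≤ w
      have hvw : v < w := by omega
      have hgap' : ∀ z ∈ P, ¬(v ≤ z ∧ z < w) := fun z hz => by
        have := hgap z hz; omega
      have hPk : cnt P k = cnt P v := cnt_gap hgap' (by omega) hkw
      have hQv := cnt_lt_mem hv (show v < k by omega)
      have := h v
      split_ifs at hs <;> omega
    · have := h k; split_ifs at hs <;> omega

/-- Swap lemma, shape `min (cnt B k) c ≤ cnt Q (k+1)`. -/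
lemma swap_gts {B Q : Finset ℕ} {v w : ℕ} (hv : v ∈ Q) (hw : w ∉ Q) (c : ℕ)
    (hgap : ∀ z ∈ B, ¬(min v w ≤ z ∧ z < max v w))
    (h : ∀ k, min (cnt B k) c ≤ cnt Q (k + 1)) :
    ∀ k, min (cnt B k) c ≤ cnt (insert w (Q.erase v)) (k + 1) := by
  intro k
  have hs := cnt_swap hv hw (k + 1)
  by_cases hkv : k + 1 ≤ v
  · by_cases hkw : k + 1 ≤ w
    · have := h k; split_ifs at hs <;> omega
    · -- w < k + 1 ≤ v, i.e. w ≤ k ≤ v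
      have hwv : w < v := by omega
      have hgap' : ∀ z ∈ B, ¬(w ≤ z ∧ z < v) := fun z hz => by
        have := hgap z hz; omega
      have hBk : cnt B k = cnt B w := cnt_gap hgap' (by omega) (by omega)
      have hBv : cnt B v = cnt B w := cnt_gap hgap' (by omega) (by omega)
      have hQk : cnt Q v ≤ cnt Q (k + 1) := cnt_anti (by omega)
      have hQv := cnt_lt_mem hv (show v < v + 1 by omega)
      have := h v
      split_ifs at hs <;> omega
  · have := h k; split_ifs at hs <;> omega

/-- Swap lemma, shape `min (cnt Q k) c ≤ cnt B k + 1`. -/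
lemma swap_ge1 {B Q : Finset ℕ} {v w : ℕ} (hv : v ∈ Q) (hw : w ∉ Q) (c : ℕ)
    (hgap : ∀ z ∈ B, ¬(min v w ≤ z ∧ z < max v w))
    (h : ∀ k, min (cnt Q k) c ≤ cnt B k + 1) :
    ∀ k, min (cnt (insert w (Q.erase v)) k) c ≤ cnt B k + 1 := by
  intro k
  have hs := cnt_swap hv hw k
  by_cases hkv : k ≤ v
  · have := h k; split_ifs at hs <;> omega
  · by_cases hkw : k ≤ w
    · have hvw : v < w := by omega
      have hgap' : ∀ z ∈ B, ¬(v ≤ z ∧ z < w) := fun z hz => by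
        have := hgap z hz; omega
      have hBk : cnt B k = cnt B v := cnt_gap hgap' (by omega) hkw
      have hQv := cnt_lt_mem hv (show v < k by omega)
      have := h v
      split_ifs at hs <;> omega
    · have := h k; split_ifs at hs <;> omega

/-- Swap lemma, shape `min (cnt A k) c ≤ cnt Q (k+1) + 1`. -/
lemma swap_gt1 {A Q : Finset ℕ} {v w : ℕ} (hv : v ∈ Q) (hw : w ∉ Q) (c : ℕ)
    (hgap : ∀ z ∈ A, ¬(min v w ≤ z ∧ z < max v w))
    (h : ∀ k, min (cnt A k) c ≤ cnt Q (k + 1) + 1) :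
    ∀ k, min (cnt A k) c ≤ cnt (insert w (Q.erase v)) (k + 1) + 1 := by
  intro k
  have hs := cnt_swap hv hw (k + 1)
  by_cases hkv : k + 1 ≤ v
  · by_cases hkw : k + 1 ≤ w
    · have := h k; split_ifs at hs <;> omega
    · have hwv : w < v := by omega
      have hgap' : ∀ z ∈ A, ¬(w ≤ z ∧ z < v) := fun z hz => by
        have := hgap z hz; omega
      have hAk : cnt A k = cnt A w := cnt_gap hgap' (by omega) (by omega)
      have hAv : cnt A v = cnt A w := cnt_gap hgap' (by omega) (by omega)
      have hQk : cnt Q v ≤ cnt Q (k + 1) := cnt_anti (by omega)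
      have hQv := cnt_lt_mem hv (show v < v + 1 by omega)
      have := h v
      split_ifs at hs <;> omega
  · have := h k; split_ifs at hs <;> omega

/-- Separation, shape I: if `u_i > w_i ≥ u_{i+1}`, two elements of `u` are
separated by an element of `w`. -/
lemma sepI {u w : Finset ℕ} (h1 : ∀ i, oRel (· > ·) (ent u i) (ent w i))
    (h2 : ∀ i, oRel (· ≥ ·) (ent w i) (ent u (i + 1)))
    (hcard : u.card ≤ w.card + 1)
    {x x' : ℕ} (hx : x ∈ u) (hx' : x' ∈ u) (hlt : x < x') :
    ∃ b ∈ w, x ≤ b ∧ b < x' := by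
  obtain ⟨i, hi⟩ := mem_exists_ent hx
  obtain ⟨i', hi'⟩ := mem_exists_ent hx'
  have hii : i' < i := by
    by_contra hge
    push_neg at hge
    have := ent_anti hi hi' hge
    omega
  have hiu : i < u.card := ent_lt_card hi
  obtain ⟨b, hb⟩ := exists_ent_of_lt_card (s := w) (i := i') (by omega)
  obtain ⟨u1, hu1⟩ := exists_ent_of_lt_card (s := u) (i := i' + 1) (by omega)
  have hbx' : b < x' := by have := h1 i'; rw [hi', hb] at this; exact this
  have hbu1 : u1 ≤ b := by have := h2 i'; rw [hb, hu1] at this; exact this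
  have hxu1 : x ≤ u1 := ent_anti hu1 hi (by omega)
  exact ⟨b, ent_mem hb, by omega, hbx'⟩

/-- Separation, shape II: if `w_i ≥ u_i > w_{i+1}`, two elements of `u` are
separated by an element of `w`. -/
lemma sepII {u w : Finset ℕ} (h1 : ∀ i, oRel (· ≥ ·) (ent w i) (ent u i))
    (h2 : ∀ i, oRel (· > ·) (ent u i) (ent w (i + 1)))
    (hcard : u.card ≤ w.card)
    {y y' : ℕ} (hy : y ∈ u) (hy' : y' ∈ u) (hlt : y < y') :
    ∃ a ∈ w, y ≤ a ∧ a < y' := by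
  obtain ⟨i, hi⟩ := mem_exists_ent hy
  obtain ⟨i', hi'⟩ := mem_exists_ent hy'
  have hii : i' < i := by
    by_contra hge
    push_neg at hge
    have := ent_anti hi hi' hge
    omega
  have hiu : i < u.card := ent_lt_card hi
  obtain ⟨a, ha⟩ := exists_ent_of_lt_card (s := w) (i := i' + 1) (by omega)
  obtain ⟨u1, hu1⟩ := exists_ent_of_lt_card (s := u) (i := i' + 1) (by omega)
  have hay' : a < y' := by have := h2 i'; rw [hi', ha] at this; exact this
  have hau1 : u1 ≤ a := by have := h1 (i' + 1); rw [ha, hu1] at this; exact this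
  have hyu1 : y ≤ u1 := ent_anti hu1 hi (by omega)
  exact ⟨a, ent_mem ha, by omega, hay'⟩

/-- Pigeonhole: two elements of `U` in the same gap of `V`. -/
lemma pigeon {U V : Finset ℕ} {t0 : ℕ} (hV : t0 ∈ V)
    (hcard : (V.filter (· ≤ t0)).card < (U.filter (· ≤ t0)).card) :
    ∃ v ∈ U, ∃ v' ∈ U, v < v' ∧ v' ≤ t0 ∧ ∀ z ∈ V, ¬(v ≤ z ∧ z < v') := by
  classical
  set g : ℕ → ℕ := fun v =>
    if h : (V.filter (fun z => v ≤ z ∧ z ≤ t0)).Nonempty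
    then (V.filter (fun z => v ≤ z ∧ z ≤ t0)).min' h else 0 with hg
  have hkey : ∀ v, v ≤ t0 → (g v ∈ V ∧ v ≤ g v ∧ g v ≤ t0) ∧
      ∀ z ∈ V, v ≤ z → z ≤ t0 → g v ≤ z := by
    intro v hv
    have hne : (V.filter (fun z => v ≤ z ∧ z ≤ t0)).Nonempty :=
      ⟨t0, Finset.mem_filter.mpr ⟨hV, hv, le_refl _⟩⟩
    have hgv : g v = (V.filter (fun z => v ≤ z ∧ z ≤ t0)).min' hne := by
      rw [hg]; simp only [dif_pos hne]
    constructor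
    · have := Finset.min'_mem _ hne
      rw [Finset.mem_filter] at this
      rw [hgv]
      exact ⟨this.1, this.2.1, this.2.2⟩
    · intro z hz h1 h2
      rw [hgv]
      exact Finset.min'_le _ _ (Finset.mem_filter.mpr ⟨hz, h1, h2⟩)
  have hmaps : ∀ v ∈ U.filter (· ≤ t0), g v ∈ V.filter (· ≤ t0) := by
    intro v hv
    rw [Finset.mem_filter] at hv
    obtain ⟨⟨h1, _, h3⟩, _⟩ := hkey v hv.2
    exact Finset.mem_filter.mpr ⟨h1, h3⟩
  obtain ⟨v, hv, v', hv', hne, heq⟩ :=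
    Finset.exists_ne_map_eq_of_card_lt_of_maps_to hcard hmaps
  rw [Finset.mem_filter] at hv hv'
  -- wlog v < v'
  rcases Nat.lt_or_ge v v' with hlt | hge
  · refine ⟨v, hv.1, v', hv'.1, hlt, hv'.2, ?_⟩
    intro z hz hcon
    obtain ⟨_, hmin⟩ := hkey v hv.2
    obtain ⟨⟨_, hle, _⟩, _⟩ := hkey v' hv'.2
    have := hmin z hz hcon.1 (by omega)
    omega
  · have hlt : v' < v := by omega
    refine ⟨v', hv'.1, v, hv.1, hlt, hv.2, ?_⟩
    intro z hz hcon
    obtain ⟨_, hmin⟩ := hkey v' hv'.2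
    obtain ⟨⟨_, hle, _⟩, _⟩ := hkey v hv.2
    have := hmin z hz hcon.1 (by omega)
    omega



lemma low_add_cnt (X : Finset ℕ) (t0 : ℕ) :
    (X.filter (· ≤ t0)).card + cnt X (t0 + 1) = X.card := by
  classical
  have h := Finset.card_filter_add_card_filter_not (s := X) (p := (· ≤ t0))
  have he : X.filter (fun x => ¬ x ≤ t0) = X.filter (fun y => t0 + 1 ≤ y) := by
    apply Finset.filter_congr
    intro z _
    constructor <;> intro <;> omega
  rw [he] at h
  exact h

lemma low_union_le {A B : Finset ℕ} {t0 : ℕ} (h : t0 ∈ A) (h' : t0 ∈ B) :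
    ((A ∪ B).filter (· ≤ t0)).card + 1
      ≤ (A.filter (· ≤ t0)).card + (B.filter (· ≤ t0)).card := by
  classical
  rw [Finset.filter_union]
  have hc := Finset.card_union_add_card_inter (A.filter (· ≤ t0)) (B.filter (· ≤ t0))
  have hpos : 0 < ((A.filter (· ≤ t0)) ∩ (B.filter (· ≤ t0))).card := by
    apply Finset.card_pos.mpr
    exact ⟨t0, Finset.mem_inter.mpr ⟨Finset.mem_filter.mpr ⟨h, le_refl _⟩,
      Finset.mem_filter.mpr ⟨h', le_refl _⟩⟩⟩
  omega

lemma low_union_eq {s t : Finset ℕ} {t0 : ℕ} (h : Disjoint s t) :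
    ((s ∪ t).filter (· ≤ t0)).card
      = (s.filter (· ≤ t0)).card + (t.filter (· ≤ t0)).card := by
  classical
  rw [Finset.filter_union]
  exact Finset.card_union_of_disjoint (Finset.disjoint_filter_filter h)

lemma self_mem_Sbar (Z : Symb) : Z ∈ Sbar Z :=
  ⟨(∅, ∅), ⟨Finset.empty_subset _, Finset.empty_subset _⟩, by simp [lam]⟩

lemma swap_mem_Sbar {W : Symb} (hreg : Regular W) {x y : ℕ} (hx : x ∈ W.1) (hy : y ∈ W.2) :
    (insert y (W.1.erase x), insert x (W.2.erase y)) ∈ Sbar W := by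
  refine ⟨({x}, {y}), ⟨?_, ?_⟩, ?_⟩
  · rw [Finset.singleton_subset_iff, Finset.mem_sdiff]
    exact ⟨hx, Finset.disjoint_left.mp hreg hx⟩
  · rw [Finset.singleton_subset_iff, Finset.mem_sdiff]
    exact ⟨hy, Finset.disjoint_right.mp hreg hy⟩
  · have h1 : insert y (W.1.erase x) = (W.1 \ {x}) ∪ {y} := by
      ext z
      simp only [Finset.mem_insert, Finset.mem_erase, Finset.mem_sdiff, Finset.mem_union,
        Finset.mem_singleton]
      tauto
    have h2 : insert x (W.2.erase y) = (W.2 \ {y}) ∪ {x} := by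
      ext z
      simp only [Finset.mem_insert, Finset.mem_erase, Finset.mem_sdiff, Finset.mem_union,
        Finset.mem_singleton]
      tauto
    rw [lam]
    exact Prod.ext h1 h2



/-- Case `m' = m + 1`: swapping a `Z`-gap-free pair of `Z'` stays in `D_Z`. -/
lemma swap_DRel1 {Z Z' : Symb} {m : ℕ} (hD : DRel Z Z' m (m + 1) Z Z') (hreg : Regular Z')
    {x y : ℕ} (hx : x ∈ Z'.1) (hy : y ∈ Z'.2)
    (hgapA : ∀ z ∈ Z.1, ¬(min x y ≤ z ∧ z < max x y))
    (hgapB : ∀ z ∈ Z.2, ¬(min x y ≤ z ∧ z < max x y)) :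
    DRel Z Z' m (m + 1) Z (insert y (Z'.1.erase x), insert x (Z'.2.erase y)) := by
  obtain ⟨⟨hSb1, _, hdis⟩, hc1, hc2, hc3, hc4⟩ := hD
  have hbm : Bm1 Z Z' := by
    rcases hdis with ⟨hfalse, _⟩ | ⟨_, hbm⟩
    · omega
    · exact hbm
  obtain ⟨hb1, hb2, hb3, hb4, hb5, hb6⟩ := hbm
  have hxn2 : x ∉ Z'.2 := Finset.disjoint_left.mp hreg hx
  have hyn1 : y ∉ Z'.1 := Finset.disjoint_right.mp hreg hy
  have hcard1 : (insert y (Z'.1.erase x)).card = Z'.1.card := card_swap hx hyn1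
  have hcard2 : (insert x (Z'.2.erase y)).card = Z'.2.card := card_swap hy hxn2
  have hgapA' : ∀ z ∈ Z.1, ¬(min y x ≤ z ∧ z < max y x) := fun z hz => by
    have := hgapA z hz; omega
  have hgapB' : ∀ z ∈ Z.2, ¬(min y x ≤ z ∧ z < max y x) := fun z hz => by
    have := hgapB z hz; omega
  refine ⟨⟨hSb1, swap_mem_Sbar hreg hx hy, Or.inr ⟨rfl, ?_, ?_, ?_, ?_, ?_, ?_⟩⟩,
    hc1, hc2, by simpa [hcard1] using hc3, by simpa [hcard2] using hc4⟩
  · simpa [hcard1] using hb1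
  · simpa [hcard2] using hb2
  · exact (Rge Z.1 _).mpr (swap_ges hy hxn2 Z.1.card hgapA' ((Rge Z.1 Z'.2).mp hb3))
  · apply (Rgt1 _ Z.1).mpr
    simp only [hcard2]
    exact swap_gt1 hy hxn2 (Z'.2.card + 1) hgapA' ((Rgt1 Z'.2 Z.1).mp hb4)
  · exact (Rge1 Z.2 _).mpr (swap_ge1 hx hyn1 (Z.2.card + 1) hgapB ((Rge1 Z.2 Z'.1).mp hb5))
  · apply (Rgt _ Z.2).mpr
    simp only [hcard1]
    exact swap_gts hx hyn1 Z'.1.card hgapB ((Rgt Z'.1 Z.2).mp hb6)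

/-- Case `m' = m`: swapping a `Z'`-gap-free pair of `Z` stays in `D_{Z'}`. -/
lemma swap_DRel0 {Z Z' : Symb} {m : ℕ} (hD : DRel Z Z' m m Z Z') (hreg : Regular Z)
    {x y : ℕ} (hx : x ∈ Z.1) (hy : y ∈ Z.2)
    (hgaps : ∀ z ∈ Z'.1, ¬(min x y ≤ z ∧ z < max x y))
    (hgapt : ∀ z ∈ Z'.2, ¬(min x y ≤ z ∧ z < max x y)) :
    DRel Z Z' m m (insert y (Z.1.erase x), insert x (Z.2.erase y)) Z' := by
  obtain ⟨⟨_, hSb2, hdis⟩, hc1, hc2, hc3, hc4⟩ := hD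
  have hbm : Bm Z Z' := by
    rcases hdis with ⟨_, hbm⟩ | ⟨hfalse, _⟩
    · exact hbm
    · omega
  obtain ⟨hb1, hb2, hb3, hb4, hb5, hb6⟩ := hbm
  have hxn2 : x ∉ Z.2 := Finset.disjoint_left.mp hreg hx
  have hyn1 : y ∉ Z.1 := Finset.disjoint_right.mp hreg hy
  have hcard1 : (insert y (Z.1.erase x)).card = Z.1.card := card_swap hx hyn1
  have hcard2 : (insert x (Z.2.erase y)).card = Z.2.card := card_swap hy hxn2
  have hgaps' : ∀ z ∈ Z'.1, ¬(min y x ≤ z ∧ z < max y x) := fun z hz => by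
    have := hgaps z hz; omega
  have hgapt' : ∀ z ∈ Z'.2, ¬(min y x ≤ z ∧ z < max y x) := fun z hz => by
    have := hgapt z hz; omega
  refine ⟨⟨swap_mem_Sbar hreg hx hy, hSb2, Or.inl ⟨rfl, ?_, ?_, ?_, ?_, ?_, ?_⟩⟩,
    by simpa [hcard1] using hc1, by simpa [hcard2] using hc2, hc3, hc4⟩
  · simpa [hcard2] using hb1
  · simpa [hcard1] using hb2
  · apply (Rgt _ Z'.2).mpr
    simp only [hcard1]
    exact swap_gts hx hyn1 Z.1.card hgapt ((Rgt Z.1 Z'.2).mp hb3)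
  · exact (Rge1 Z'.2 _).mpr (swap_ge1 hx hyn1 (Z'.2.card + 1) hgapt ((Rge1 Z'.2 Z.1).mp hb4))
  · apply (Rgt1 _ Z'.1).mpr
    simp only [hcard2]
    exact swap_gt1 hy hxn2 (Z.2.card + 1) hgaps' ((Rgt1 Z.2 Z'.1).mp hb5)
  · exact (Rge Z'.1 _).mpr (swap_ges hy hxn2 Z'.1.card hgaps' ((Rge Z'.1 Z.2).mp hb6))

end Stmt9Aux

open Stmt9Aux in
theorem stmt9 (m m' : ℕ) (Z Z' : Symb) (hm : m' = m ∨ m' = m + 1)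
    (hZ : IsSpecial1 Z m) (hZ' : IsSpecial0 Z' m') :
    (m' = m + 1 → Regular Z' → {Λ' | DRel Z Z' m m' Z Λ'} = {Z'} → Regular Z) ∧
    (m' = m → Regular Z → {Λ | DRel Z Z' m m' Λ Z'} = {Z} → Regular Z') := by
  constructor
  · -- part (i)
    intro hm1 hregZ' hset
    subst hm1
    by_contra hnreg
    rw [Regular, Finset.not_disjoint_iff] at hnreg
    obtain ⟨t0, ht0A, ht0B⟩ := hnreg
    have hZ'D : DRel Z Z' m (m + 1) Z Z' := by
      have : Z' ∈ ({Z'} : Set Symb) := rfl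
      rw [← hset] at this
      exact this
    have hbm : Bm1 Z Z' := by
      rcases hZ'D.1.2.2 with ⟨hf, _⟩ | ⟨_, h⟩
      · omega
      · exact h
    obtain ⟨hb1, hb2, hb3, hb4, hb5, hb6⟩ := hbm
    have hAt : ∀ k, cnt Z'.2 k ≤ cnt Z.1 k := by
      intro k
      have h1 := (Rge Z.1 Z'.2).mp hb3 k
      have h2 := cnt_le_card Z'.2 k
      omega
    have hBs : ∀ k, cnt Z'.1 k ≤ cnt Z.2 k + 1 := by
      intro k
      have h1 := (Rge1 Z.2 Z'.1).mp hb5 k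
      have h2 := cnt_le_card Z'.1 k
      omega
    have eA := low_add_cnt Z.1 t0
    have eB := low_add_cnt Z.2 t0
    have es := low_add_cnt Z'.1 t0
    have et := low_add_cnt Z'.2 t0
    have hU := low_union_eq (t0 := t0) (hregZ' : Disjoint Z'.1 Z'.2)
    have hV := low_union_le (t0 := t0) ht0A ht0B
    have hpig : ((Z.1 ∪ Z.2).filter (· ≤ t0)).card < ((Z'.1 ∪ Z'.2).filter (· ≤ t0)).card := by
      have h1 := hAt (t0 + 1)
      have h2 := hBs (t0 + 1)
      omega
    obtain ⟨v, hvU, v', hv'U, hvv', hv't0, hgap⟩ := pigeon (Finset.mem_union_left _ ht0A) hpig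
    have hfinish : ∀ x ∈ Z'.1, ∀ y ∈ Z'.2, min x y = v → max x y = v' → False := by
      intro x hx y hy hmin hmax
      have hgapA : ∀ z ∈ Z.1, ¬(min x y ≤ z ∧ z < max x y) := fun z hz => by
        have := hgap z (Finset.mem_union_left _ hz); omega
      have hgapB : ∀ z ∈ Z.2, ¬(min x y ≤ z ∧ z < max x y) := fun z hz => by
        have := hgap z (Finset.mem_union_right _ hz); omega
      have hD'' := swap_DRel1 hZ'D hregZ' hx hy hgapA hgapB
      have hmem : (insert y (Z'.1.erase x), insert x (Z'.2.erase y)) ∈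
          ({Z'} : Set Symb) := by
        rw [← hset]
        exact hD''
      have heq : (insert y (Z'.1.erase x), insert x (Z'.2.erase y)) = Z' := hmem
      have h1 : insert y (Z'.1.erase x) = Z'.1 := congrArg Prod.fst heq
      have hy1 : y ∈ Z'.1 := h1 ▸ Finset.mem_insert_self y _
      exact (Finset.disjoint_right.mp hregZ' hy) hy1
    rcases Finset.mem_union.mp hvU with hv1 | hv2 <;>
      rcases Finset.mem_union.mp hv'U with hv'1 | hv'2
    · obtain ⟨b, hbB, hble, hblt⟩ := sepI hb6 hb5 (le_of_eq hb1) hv1 hv'1 hvv'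
      exact hgap b (Finset.mem_union_right _ hbB) ⟨hble, hblt⟩
    · exact hfinish v hv1 v' hv'2 (by omega) (by omega)
    · exact hfinish v' hv'1 v hv2 (by omega) (by omega)
    · obtain ⟨a, haA, hale, halt⟩ := sepII hb3 hb4 (le_of_eq hb2) hv2 hv'2 hvv'
      exact hgap a (Finset.mem_union_left _ haA) ⟨hale, halt⟩
  · -- part (ii)
    intro hm0 hregZ hset
    subst hm0
    by_contra hnreg
    rw [Regular, Finset.not_disjoint_iff] at hnreg
    obtain ⟨t0, ht0s, ht0t⟩ := hnreg
    have hZD : DRel Z Z' m' m' Z Z' := by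
      have : Z ∈ ({Z} : Set Symb) := rfl
      rw [← hset] at this
      exact this
    have hbm : Bm Z Z' := by
      rcases hZD.1.2.2 with ⟨_, h⟩ | ⟨hf, _⟩
      · exact h
      · omega
    obtain ⟨hb1, hb2, hb3, hb4, hb5, hb6⟩ := hbm
    have hAt : ∀ k, cnt Z.1 k ≤ cnt Z'.2 k + 1 := by
      intro k
      have h1 := (Rge1 Z'.2 Z.1).mp hb4 k
      have h2 := cnt_le_card Z.1 k
      omega
    have hBs : ∀ k, cnt Z.2 k ≤ cnt Z'.1 k := by
      intro k
      have h1 := (Rge Z'.1 Z.2).mp hb6 k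
      have h2 := cnt_le_card Z.2 k
      omega
    have eA := low_add_cnt Z.1 t0
    have eB := low_add_cnt Z.2 t0
    have es := low_add_cnt Z'.1 t0
    have et := low_add_cnt Z'.2 t0
    have hU := low_union_eq (t0 := t0) (hregZ : Disjoint Z.1 Z.2)
    have hV := low_union_le (t0 := t0) ht0s ht0t
    have hpig : ((Z'.1 ∪ Z'.2).filter (· ≤ t0)).card < ((Z.1 ∪ Z.2).filter (· ≤ t0)).card := by
      have h1 := hAt (t0 + 1)
      have h2 := hBs (t0 + 1)
      omega
    obtain ⟨v, hvU, v', hv'U, hvv', hv't0, hgap⟩ := pigeon (Finset.mem_union_left _ ht0s) hpig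
    have hfinish : ∀ x ∈ Z.1, ∀ y ∈ Z.2, min x y = v → max x y = v' → False := by
      intro x hx y hy hmin hmax
      have hgaps : ∀ z ∈ Z'.1, ¬(min x y ≤ z ∧ z < max x y) := fun z hz => by
        have := hgap z (Finset.mem_union_left _ hz); omega
      have hgapt : ∀ z ∈ Z'.2, ¬(min x y ≤ z ∧ z < max x y) := fun z hz => by
        have := hgap z (Finset.mem_union_right _ hz); omega
      have hD'' := swap_DRel0 hZD hregZ hx hy hgaps hgapt
      have hmem : (insert y (Z.1.erase x), insert x (Z.2.erase y)) ∈
          ({Z} : Set Symb) := by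
        rw [← hset]
        exact hD''
      have heq : (insert y (Z.1.erase x), insert x (Z.2.erase y)) = Z := hmem
      have h1 : insert y (Z.1.erase x) = Z.1 := congrArg Prod.fst heq
      have hy1 : y ∈ Z.1 := h1 ▸ Finset.mem_insert_self y _
      exact (Finset.disjoint_right.mp hregZ hy) hy1
    rcases Finset.mem_union.mp hvU with hv1 | hv2 <;>
      rcases Finset.mem_union.mp hv'U with hv'1 | hv'2
    · obtain ⟨b, hbB, hble, hblt⟩ := sepI hb3 hb4 (by omega) hv1 hv'1 hvv'
      exact hgap b (Finset.mem_union_right _ hbB) ⟨hble, hblt⟩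
    · exact hfinish v hv1 v' hv'2 (by omega) (by omega)
    · exact hfinish v' hv'1 v hv2 (by omega) (by omega)
    · obtain ⟨a, haA, hale, halt⟩ := sepII hb6 hb5 (le_of_eq hb1.symm) hv2 hv'2 hvv'
      exact hgap a (Finset.mem_union_left _ haA) ⟨hale, halt⟩
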